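/- For the Bernoulli matching model with parameter k and 1-reach, the asymptotic constant is γ_{k,1}^B = (3k+2)/(k²+3k+1). Equivalently, 1 is a simple root λ = 1 of the characteristic polynomial g(λ,b) at b = 1, and the implicitly defined Perron root f₁(b) satisfies df₁/db |_{b=1} = (3k+2)/(k²+3k+1), where g(λ,b) = (1/k⁵)(−λk+b)(b³ − b²kλ(k+2) + bλ(k³ + 2k³λ − 3k² + k²λ + 3k − 1) + λ²k(k³ − λk³ − 3k² + 3k − 1)). -/

import Mathlib

open Filter

/-- The characteristic polynomial of the 1-reach Bernoulli matching transfer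
matrix, as a function of `l` (the eigenvalue variable λ) and `b`. -/
noncomputable def g1reachB (k : ℝ) (l b : ℝ) : ℝ :=
  (1 / k ^ 5) * (-l * k + b) *
    (b ^ 3 - b ^ 2 * k * l * (k + 2)
      + b * l * (k ^ 3 + 2 * k ^ 3 * l - 3 * k ^ 2 + k ^ 2 * l + 3 * k - 1)
      + l ^ 2 * k * (k ^ 3 - l * k ^ 3 - 3 * k ^ 2 + 3 * k - 1))

/-- 1-reach Bernoulli matching: λ = 1 is a simple root of `g(·,1)`, and any
implicitly defined differentiable root `f₁` with `f₁ 1 = 1` has derivative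
`(3k+2)/(k²+3k+1)` at `b = 1`; hence `γ_{k,1}^B = (3k+2)/(k²+3k+1)`. -/
theorem gamma_k1_B (k : ℝ) (hk : 2 ≤ k) :
    g1reachB k 1 1 = 0 ∧
    deriv (fun l => g1reachB k l 1) 1 ≠ 0 ∧
    ∀ f₁ : ℝ → ℝ, f₁ 1 = 1 →
      (∀ᶠ b in nhds 1, g1reachB k (f₁ b) b = 0) →
      DifferentiableAt ℝ f₁ 1 →
      deriv f₁ 1 = (3 * k + 2) / (k ^ 2 + 3 * k + 1) := by
  have hk0 : (0:ℝ) < k := by linarith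
  have hkne : k ≠ 0 := ne_of_gt hk0
  have hk1 : (0:ℝ) < k - 1 := by linarith
  refine ⟨by unfold g1reachB; ring, ?_, ?_⟩
  · -- deriv in l at 1 is nonzero
    have hfun : (fun l : ℝ => g1reachB k l 1)
        = fun l => (1/k^5) * (1 + (k^3 - 4*k^2 - 1)*l + (3*k^3 + 3*k^2)*l^2
            + (-(k^5) - 4*k^3 + k^2)*l^3 + k^5*l^4) := by
      funext l; unfold g1reachB; ring
    have H : HasDerivAt (fun l : ℝ => (1 + (k^3 - 4*k^2 - 1)*l + (3*k^3 + 3*k^2)*l^2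
            + (-(k^5) - 4*k^3 + k^2)*l^3 + k^5*l^4)) _ 1 :=
      ((((hasDerivAt_const (1:ℝ) (1:ℝ)).add ((hasDerivAt_id (1:ℝ)).const_mul (k^3 - 4*k^2 - 1))).add
        ((hasDerivAt_pow 2 (1:ℝ)).const_mul (3*k^3 + 3*k^2))).add
        ((hasDerivAt_pow 3 (1:ℝ)).const_mul (-(k^5) - 4*k^3 + k^2))).add
        ((hasDerivAt_pow 4 (1:ℝ)).const_mul (k^5))
    have H2 := H.const_mul (1/k^5)
    rw [hfun, H2.deriv]
    intro hzero
    push_cast at hzero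
    norm_num at hzero
    have hp : (0:ℝ) < (k^2+3*k+1)*(k-1)^3 := mul_pos (by nlinarith) (pow_pos hk1 3)
    rcases hzero with h | h
    · exact hkne h
    · nlinarith [hp, h]
  · intro f₁ hf1 hev hdiff
    have hf : HasDerivAt f₁ (deriv f₁ 1) 1 := hdiff.hasDerivAt
    set d := deriv f₁ 1 with hd
    have T1 := hasDerivAt_pow 4 (1:ℝ)
    have T2 := (hf.mul (hasDerivAt_pow 2 (1:ℝ))).const_mul ((k-1)^3)
    have T3 := (hf.mul (hasDerivAt_pow 3 (1:ℝ))).const_mul (k^2+3*k)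
    have T4 := ((hf.pow 2).mul (hasDerivAt_pow 2 (1:ℝ))).const_mul (3*k^3+3*k^2)
    have T5 := (hf.pow 3).const_mul (k^2*(k-1)^3)
    have T6 := ((hf.pow 3).mul (hasDerivAt_id (1:ℝ))).const_mul (3*k^4+k^3)
    have T7 := (hf.pow 4).const_mul (k^5)
    have H := ((((((T1.add T2).sub T3).add T4).sub T5).sub T6).add T7).const_mul (1/k^5)
    have hEq : (fun b => g1reachB k (f₁ b) b)
        = (fun b => (1/k^5) * ((b^4 + (k-1)^3 * (f₁ b * b^2) - (k^2+3*k) * (f₁ b * b^3)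
          + (3*k^3+3*k^2) * ((f₁ b)^2 * b^2) - (k^2*(k-1)^3) * ((f₁ b)^3)
          - (3*k^4+k^3) * ((f₁ b)^3 * id b) + k^5 * (f₁ b)^4))) := by
      funext b; unfold g1reachB; simp only [id]; ring
    have hderiv0 : deriv (fun b => g1reachB k (f₁ b) b) 1 = 0 := by
      have heq : (fun b => g1reachB k (f₁ b) b) =ᶠ[nhds 1] (fun _ => (0:ℝ)) := hev
      rw [heq.deriv_eq]; simp
    have H' : HasDerivAt (fun b => (1/k^5) * ((b^4 + (k-1)^3 * (f₁ b * b^2) - (k^2+3*k) * (f₁ b * b^3)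
          + (3*k^3+3*k^2) * ((f₁ b)^2 * b^2) - (k^2*(k-1)^3) * ((f₁ b)^3)
          - (3*k^4+k^3) * ((f₁ b)^3 * id b) + k^5 * (f₁ b)^4))) _ 1 := H
    rw [hEq, H'.deriv] at hderiv0
    simp only [Pi.pow_apply] at hderiv0
    rw [hf1] at hderiv0
    push_cast at hderiv0
    norm_num at hderiv0
    have hden : k^2+3*k+1 ≠ 0 := by nlinarith
    have h3 : ((k:ℝ)-1)^3 ≠ 0 := ne_of_gt (pow_pos hk1 3)
    rw [eq_div_iff hden]
    apply mul_left_cancel₀ h3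
    rcases hderiv0 with h | h
    · exact absurd h hkne
    · linear_combination h
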